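/- Suppose |F(a) − F(b) − ⟨∇F(b), a−b⟩| ≤ D_h(a,b) for all a,b, h is μ-strongly convex, and x^{k+1} = argmin_{y∈X} {τ⟨w, y − x^k⟩ + D_h(y, x^k)} while x̂^{k+1} = argmin_{y∈X} {(τ/2)⟨∇F(x^k), y − x^k⟩ + D_h(y, x^k)} over a closed convex set X. Then F(x^{k+1}) − F(x^k) ≤ (τ/(2μ))‖∇F(x^k) − w‖² + (2 − 1/τ) D_h(x̂^{k+1}, x^k) + (1 − 1/τ) D_h(x^{k+1}, x^k). -/

import Mathlib

open RealInnerProductSpace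

/-- Pure real-arithmetic core of the descent bound. -/
lemma sor_descent_bound_aux (τ μ Fd a b c D1 D2 D3 D4 n m : ℝ)
    (hτ : 0 < τ) (hμ : 0 < μ)
    (h1 : Fd ≤ a + b + c + D1)
    (hy : τ * a ≤ τ ^ 2 / (2 * μ) * n ^ 2 + μ / 2 * m ^ 2)
    (h2 : τ * b ≤ D2 - D1 - D3)
    (h3 : τ / 2 * c ≤ -D2 - D4)
    (h4 : μ / 2 * m ^ 2 ≤ D3)
    (hD2 : 0 ≤ D2) (hD4 : 0 ≤ D4) :
    Fd ≤ τ / (2 * μ) * n ^ 2 + (2 - 1 / τ) * D2 + (1 - 1 / τ) * D1 := by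
  have hτne : τ ≠ 0 := ne_of_gt hτ
  have hμne : μ ≠ 0 := ne_of_gt hμ
  have key : τ * Fd ≤ τ * (τ / (2 * μ) * n ^ 2 + (2 - 1 / τ) * D2 + (1 - 1 / τ) * D1) := by
    have e : τ * (τ / (2 * μ) * n ^ 2 + (2 - 1 / τ) * D2 + (1 - 1 / τ) * D1)
        = τ ^ 2 / (2 * μ) * n ^ 2 + (2 * τ - 1) * D2 + (τ - 1) * D1 := by
      field_simp
    rw [e]
    have h1' : τ * Fd ≤ τ * (a + b + c + D1) := mul_le_mul_of_nonneg_left h1 hτ.le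
    have hτD2 : 0 ≤ τ * D2 := mul_nonneg hτ.le hD2
    nlinarith [h1', hy, h2, h3, h4, hD2, hD4, hτD2]
  exact le_of_mul_le_mul_left key hτ

/-- One-step descent bound for the Bregman proximal step.
With `D_h` the Bregman divergence of a `μ`-strongly convex `h`, a two-sidedly
relatively smooth `F`, and `x⁺` (resp. `x̂⁺`) the Bregman proximal points driven by `w`
(resp. `∇F(x^k)`) over a closed convex set `X` (encoded through the assumed
three-point inequalities), we have
`F(x⁺) − F(x^k) ≤ (τ/(2μ))‖∇F(x^k) − w‖² + (2 − 1/τ) D_h(x̂⁺, x^k) + (1 − 1/τ) D_h(x⁺, x^k)`. -/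
theorem sor_descent_bound {d : ℕ}
    (F h : EuclideanSpace ℝ (Fin d) → ℝ)
    (gradF gradh : EuclideanSpace ℝ (Fin d) → EuclideanSpace ℝ (Fin d))
    (X : Set (EuclideanSpace ℝ (Fin d)))
    (hXclosed : IsClosed X) (hXconvex : Convex ℝ X)
    (τ μ : ℝ) (hτ : 0 < τ) (hτ' : τ < 1 / 2) (hμ : 0 < μ)
    (w xk x1 xhat : EuclideanSpace ℝ (Fin d))
    (hxk : xk ∈ X) (hx1 : x1 ∈ X) (hxhat : xhat ∈ X)
    (hFdiff : ∀ x, HasGradientAt F (gradF x) x)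
    (hhdiff : ∀ x, HasGradientAt h (gradh x) x)
    (hsmooth : ∀ a b, |F a - F b - ⟪gradF b, a - b⟫| ≤
      h a - h b - ⟪gradh b, a - b⟫)
    (hstrong : ∀ a b, μ / 2 * ‖a - b‖ ^ 2 ≤ h a - h b - ⟪gradh b, a - b⟫)
    (hx1min : IsMinOn (fun y => τ * ⟪w, y - xk⟫ + (h y - h xk - ⟪gradh xk, y - xk⟫)) X x1)
    (hxhatmin : IsMinOn (fun y => τ / 2 * ⟪gradF xk, y - xk⟫
      + (h y - h xk - ⟪gradh xk, y - xk⟫)) X xhat)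
    (hthree1 : ∀ y ∈ X, τ * ⟪w, x1 - y⟫ ≤
      (h y - h xk - ⟪gradh xk, y - xk⟫) - (h x1 - h xk - ⟪gradh xk, x1 - xk⟫)
        - (h y - h x1 - ⟪gradh x1, y - x1⟫))
    (hthree2 : ∀ y ∈ X, τ / 2 * ⟪gradF xk, xhat - y⟫ ≤
      (h y - h xk - ⟪gradh xk, y - xk⟫) - (h xhat - h xk - ⟪gradh xk, xhat - xk⟫)
        - (h y - h xhat - ⟪gradh xhat, y - xhat⟫)) :
    F x1 - F xk ≤ τ / (2 * μ) * ‖gradF xk - w‖ ^ 2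
      + (2 - 1 / τ) * (h xhat - h xk - ⟪gradh xk, xhat - xk⟫)
      + (1 - 1 / τ) * (h x1 - h xk - ⟪gradh xk, x1 - xk⟫) := by
  -- smoothness upper bound split into three inner-product pieces
  have hsplit : ⟪gradF xk, x1 - xk⟫
      = ⟪gradF xk - w, x1 - xhat⟫ + ⟪w, x1 - xhat⟫ + ⟪gradF xk, xhat - xk⟫ := by
    simp only [inner_sub_left, inner_sub_right]
    ring
  have h1 : F x1 - F xk ≤ ⟪gradF xk - w, x1 - xhat⟫ + ⟪w, x1 - xhat⟫
      + ⟪gradF xk, xhat - xk⟫ + (h x1 - h xk - ⟪gradh xk, x1 - xk⟫) := by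
    have := (abs_le.mp (hsmooth x1 xk)).2
    rw [hsplit] at this
    linarith
  -- three-point inequalities
  have h2 : τ * ⟪w, x1 - xhat⟫ ≤ (h xhat - h xk - ⟪gradh xk, xhat - xk⟫)
      - (h x1 - h xk - ⟪gradh xk, x1 - xk⟫) - (h xhat - h x1 - ⟪gradh x1, xhat - x1⟫) :=
    hthree1 xhat hxhat
  have h3 : τ / 2 * ⟪gradF xk, xhat - xk⟫ ≤
      -(h xhat - h xk - ⟪gradh xk, xhat - xk⟫) - (h xk - h xhat - ⟪gradh xhat, xk - xhat⟫) := by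
    have := hthree2 xk hxk
    simp only [sub_self, inner_zero_right] at this
    linarith
  -- strong convexity facts
  have h4 : μ / 2 * ‖x1 - xhat‖ ^ 2 ≤ h xhat - h x1 - ⟪gradh x1, xhat - x1⟫ := by
    have := hstrong xhat x1
    rwa [norm_sub_rev] at this
  have hD2nn : 0 ≤ h xhat - h xk - ⟪gradh xk, xhat - xk⟫ := by
    have := hstrong xhat xk
    nlinarith [sq_nonneg ‖xhat - xk‖]
  have hD4nn : 0 ≤ h xk - h xhat - ⟪gradh xhat, xk - xhat⟫ := by
    have := hstrong xk xhat
    nlinarith [sq_nonneg ‖xk - xhat‖]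
  -- Young's inequality, scaled by τ
  have hy : τ * ⟪gradF xk - w, x1 - xhat⟫
      ≤ τ ^ 2 / (2 * μ) * ‖gradF xk - w‖ ^ 2 + μ / 2 * ‖x1 - xhat‖ ^ 2 := by
    have hle : ⟪gradF xk - w, x1 - xhat⟫ ≤ ‖gradF xk - w‖ * ‖x1 - xhat‖ :=
      real_inner_le_norm _ _
    have key : ∀ n m : ℝ, τ * (n * m) ≤ τ ^ 2 / (2 * μ) * n ^ 2 + μ / 2 * m ^ 2 := by
      intro n m
      have hid : τ ^ 2 / (2 * μ) * n ^ 2 + μ / 2 * m ^ 2 - τ * (n * m)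
          = (τ * n - μ * m) ^ 2 / (2 * μ) := by
        field_simp
        ring
      nlinarith [div_nonneg (sq_nonneg (τ * n - μ * m)) (by positivity : (0:ℝ) ≤ 2 * μ)]
    calc τ * ⟪gradF xk - w, x1 - xhat⟫
        ≤ τ * (‖gradF xk - w‖ * ‖x1 - xhat‖) := mul_le_mul_of_nonneg_left hle hτ.le
      _ ≤ _ := key _ _
  exact sor_descent_bound_aux τ μ _ _ _ _ _ _ _ _ _ _ hτ hμ h1 hy h2 h3 h4 hD2nn hD4nn
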